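/- For the two-layer noisy network L(σ, ε) = ℓ(φ(w·φ(v + σ·ε) + z₂)) with ε standard normal, if ℓ and φ are continuously differentiable with bounded derivatives, then d/dσ E[L(σ, ε)] = E[δ(σ,ε)·ε], where δ(σ,ε) = ℓ'(·)·φ'(·)·w·φ'(v+σε) is the backpropagated residual error (unbiasedness of the pathwise estimator). -/

import Mathlib

open MeasureTheory ProbabilityTheory

lemma integrable_id_gaussian : Integrable (fun x : ℝ => x) (gaussianReal 0 1) := by
  rw [gaussianReal_of_var_ne_zero _ one_ne_zero]
  rw [integrable_withDensity_iff (measurable_gaussianPDF 0 1)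
    (Filter.Eventually.of_forall fun x => ENNReal.ofReal_lt_top)]
  have h : Integrable (fun x : ℝ => x * Real.exp (-(2⁻¹ : ℝ) * x ^ 2)) := by
    exact integrable_mul_exp_neg_mul_sq (by norm_num)
  have := (h.const_mul ((Real.sqrt (2 * Real.pi))⁻¹))
  refine this.congr (Filter.Eventually.of_forall fun x => ?_)
  simp only [gaussianPDF, gaussianPDFReal, NNReal.coe_one, mul_one, sub_zero]
  rw [ENNReal.toReal_ofReal (by positivity)]
  ring_nf

/-- Unbiasedness of the pathwise estimator for the two-layer noisy network:
`d/dσ E[ℓ(φ(w·φ(v+σε)+z₂))] = E[δ(σ,ε)·ε]` with `δ` the backpropagated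
residual error, for `ε ~ N(0,1)` and `ℓ, φ` C¹ with bounded derivatives. -/
theorem two_layer_unbiased_pathwise {Ω : Type*} [MeasurableSpace Ω]
    (μ : Measure Ω) [IsProbabilityMeasure μ] (ε : Ω → ℝ) (hε : Measurable ε)
    (hlaw : μ.map ε = gaussianReal 0 1)
    (ℓ φ : ℝ → ℝ) (hℓ : ContDiff ℝ 1 ℓ) (hφ : ContDiff ℝ 1 φ)
    (Cℓ Cφ : ℝ) (hCℓ : ∀ x, |deriv ℓ x| ≤ Cℓ) (hCφ : ∀ x, |deriv φ x| ≤ Cφ)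
    (v w z₂ σ : ℝ) :
    HasDerivAt (fun s => ∫ ω, ℓ (φ (w * φ (v + s * ε ω) + z₂)) ∂μ)
      (∫ ω, (deriv ℓ (φ (w * φ (v + σ * ε ω) + z₂)) *
          deriv φ (w * φ (v + σ * ε ω) + z₂) * w * deriv φ (v + σ * ε ω)) * ε ω ∂μ)
      σ := by
  have hCℓ0 : 0 ≤ Cℓ := le_trans (abs_nonneg _) (hCℓ 0)
  have hCφ0 : 0 ≤ Cφ := le_trans (abs_nonneg _) (hCφ 0)
  have hℓd : Differentiable ℝ ℓ := hℓ.differentiable one_ne_zero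
  have hφd : Differentiable ℝ φ := hφ.differentiable one_ne_zero
  -- Lipschitz bounds
  have hLipℓ : ∀ a b : ℝ, |ℓ a - ℓ b| ≤ Cℓ * |a - b| := by
    intro a b
    have := (lipschitzWith_of_nnnorm_deriv_le hℓd
      (fun x => by simpa [← NNReal.coe_le_coe, Real.coe_toNNReal _ hCℓ0] using hCℓ x)
      : LipschitzWith Cℓ.toNNReal ℓ).dist_le_mul a b
    simpa [Real.dist_eq, Real.coe_toNNReal _ hCℓ0] using this
  have hLipφ : ∀ a b : ℝ, |φ a - φ b| ≤ Cφ * |a - b| := by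
    intro a b
    have := (lipschitzWith_of_nnnorm_deriv_le hφd
      (fun x => by simpa [← NNReal.coe_le_coe, Real.coe_toNNReal _ hCφ0] using hCφ x)
      : LipschitzWith Cφ.toNNReal φ).dist_le_mul a b
    simpa [Real.dist_eq, Real.coe_toNNReal _ hCφ0] using this
  -- integrability of |ε|
  have hεint : Integrable ε μ := by
    have : Integrable (fun x : ℝ => x) (μ.map ε) := by
      rw [hlaw]; exact integrable_id_gaussian
    simpa using (integrable_map_measure aestronglyMeasurable_id hε.aemeasurable).mp this
  set F : ℝ → Ω → ℝ := fun s ω => ℓ (φ (w * φ (v + s * ε ω) + z₂)) with hF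
  set F' : ℝ → Ω → ℝ := fun s ω =>
    (deriv ℓ (φ (w * φ (v + s * ε ω) + z₂)) *
      deriv φ (w * φ (v + s * ε ω) + z₂) * w * deriv φ (v + s * ε ω)) * ε ω with hF'
  have hFmeas : ∀ s : ℝ, AEStronglyMeasurable (F s) μ := by
    intro s
    have : Continuous fun x : ℝ => ℓ (φ (w * φ (v + s * x) + z₂)) := by
      have h1 := hℓ.continuous
      have h2 := hφ.continuous
      fun_prop
    exact (this.measurable.comp hε).aestronglyMeasurable
  have hF'meas : AEStronglyMeasurable (F' σ) μ := by
    have hdℓ : Continuous (deriv ℓ) := hℓ.continuous_deriv le_rfl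
    have hdφ : Continuous (deriv φ) := hφ.continuous_deriv le_rfl
    have : Continuous fun x : ℝ =>
        (deriv ℓ (φ (w * φ (v + σ * x) + z₂)) *
          deriv φ (w * φ (v + σ * x) + z₂) * w * deriv φ (v + σ * x)) * x := by
      fun_prop
    exact (this.measurable.comp hε).aestronglyMeasurable
  have hFint : Integrable (F σ) μ := by
    refine Integrable.mono' ((hεint.abs.const_mul (Cℓ * (Cφ * (|w| * (Cφ * |σ|))))).add
      (integrable_const |ℓ (φ (w * φ v + z₂))|)) (hFmeas σ) ?_
    refine Filter.Eventually.of_forall fun ω => ?_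
    have h1 : |φ (v + σ * ε ω) - φ v| ≤ Cφ * |σ * ε ω| := by
      simpa using hLipφ (v + σ * ε ω) v
    have h2 : |w * φ (v + σ * ε ω) + z₂ - (w * φ v + z₂)| ≤ |w| * (Cφ * |σ * ε ω|) := by
      have : w * φ (v + σ * ε ω) + z₂ - (w * φ v + z₂) = w * (φ (v + σ * ε ω) - φ v) := by ring
      rw [this, abs_mul]
      exact mul_le_mul_of_nonneg_left h1 (abs_nonneg w)
    have h3 : |φ (w * φ (v + σ * ε ω) + z₂) - φ (w * φ v + z₂)| ≤
        Cφ * (|w| * (Cφ * |σ * ε ω|)) :=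
      le_trans (hLipφ _ _) (mul_le_mul_of_nonneg_left h2 hCφ0)
    have h4 : |ℓ (φ (w * φ (v + σ * ε ω) + z₂)) - ℓ (φ (w * φ v + z₂))| ≤
        Cℓ * (Cφ * (|w| * (Cφ * |σ * ε ω|))) :=
      le_trans (hLipℓ _ _) (mul_le_mul_of_nonneg_left h3 hCℓ0)
    have h5 : |ℓ (φ (w * φ (v + σ * ε ω) + z₂))| ≤
        Cℓ * (Cφ * (|w| * (Cφ * |σ * ε ω|))) + |ℓ (φ (w * φ v + z₂))| := by
      have := abs_sub_abs_le_abs_sub (ℓ (φ (w * φ (v + σ * ε ω) + z₂))) (ℓ (φ (w * φ v + z₂)))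
      linarith
    simp only [Real.norm_eq_abs, abs_mul]
    calc |F σ ω| ≤ Cℓ * (Cφ * (|w| * (Cφ * |σ * ε ω|))) + |ℓ (φ (w * φ v + z₂))| := h5
      _ = Cℓ * (Cφ * (|w| * (Cφ * |σ|))) * |ε ω| + |ℓ (φ (w * φ v + z₂))| := by
          rw [abs_mul]; ring
  have hbound : ∀ᵐ ω ∂μ, ∀ s ∈ Metric.ball σ 1, ‖F' s ω‖ ≤ Cℓ * Cφ * |w| * Cφ * |ε ω| := by
    refine Filter.Eventually.of_forall fun ω s _ => ?_
    simp only [hF', Real.norm_eq_abs, abs_mul]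
    have h1 := hCℓ (φ (w * φ (v + s * ε ω) + z₂))
    have h2 := hCφ (w * φ (v + s * ε ω) + z₂)
    have h3 := hCφ (v + s * ε ω)
    have := mul_le_mul (mul_le_mul (mul_le_mul h1 h2 (abs_nonneg _) hCℓ0)
      (le_refl |w|) (abs_nonneg _) (by positivity)) h3 (abs_nonneg _) (by positivity)
    exact mul_le_mul_of_nonneg_right this (abs_nonneg _)
  have hbint : Integrable (fun ω => Cℓ * Cφ * |w| * Cφ * |ε ω|) μ := by
    simpa [mul_assoc] using hεint.abs.const_mul (Cℓ * Cφ * |w| * Cφ)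
  have hdiff : ∀ᵐ ω ∂μ, ∀ s ∈ Metric.ball σ 1, HasDerivAt (F · ω) (F' s ω) s := by
    refine Filter.Eventually.of_forall fun ω s _ => ?_
    have h1 : HasDerivAt (fun s : ℝ => v + s * ε ω) (ε ω) s := by
      simpa using ((hasDerivAt_id s).mul_const (ε ω)).const_add v
    have h2 : HasDerivAt (fun s : ℝ => φ (v + s * ε ω))
        (deriv φ (v + s * ε ω) * ε ω) s :=
      ((hφd (v + s * ε ω)).hasDerivAt).comp s h1
    have h3 : HasDerivAt (fun s : ℝ => w * φ (v + s * ε ω) + z₂)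
        (w * (deriv φ (v + s * ε ω) * ε ω)) s := (h2.const_mul w).add_const z₂
    have h4 : HasDerivAt (fun s : ℝ => φ (w * φ (v + s * ε ω) + z₂))
        (deriv φ (w * φ (v + s * ε ω) + z₂) * (w * (deriv φ (v + s * ε ω) * ε ω))) s :=
      ((hφd _).hasDerivAt).comp s h3
    have h5 : HasDerivAt (fun s : ℝ => ℓ (φ (w * φ (v + s * ε ω) + z₂)))
        (deriv ℓ (φ (w * φ (v + s * ε ω) + z₂)) *
          (deriv φ (w * φ (v + s * ε ω) + z₂) * (w * (deriv φ (v + s * ε ω) * ε ω)))) s :=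
      ((hℓd _).hasDerivAt).comp s h4
    convert h5 using 1
    simp only [hF']
    ring
  exact (hasDerivAt_integral_of_dominated_loc_of_deriv_le (Metric.ball_mem_nhds σ one_pos)
    (Filter.Eventually.of_forall hFmeas) hFint hF'meas hbound hbint hdiff).2
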